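/- Let g : ℝ → ℝ be twice differentiable and satisfy the Airy equation g''(x) = x·g(x) for all x. Fix t ∈ ℝ, and for real z with g(z²/4 − t) ≠ 0 define F(z) = −g'(z²/4 − t)/g(z²/4 − t) + z/2. Then F is differentiable at every such z and satisfies the Laguerre–Hahn Riccati equation 2 F'(z) = z F(z)² − z² F(z) + t z + 1. -/

import Mathlib

/-- If `g` is a twice-differentiable solution of the Airy equation
`g'' = x g`, then for fixed `t` the function
`F(z) = -g'(z²/4 - t)/g(z²/4 - t) + z/2` is differentiable at every `z` with
`g(z²/4 - t) ≠ 0` and satisfies the Laguerre–Hahn Riccati equation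
`2F'(z) = z F(z)² - z² F(z) + t z + 1`. -/
theorem airy_stieltjes_laguerre_hahn
    (g : ℝ → ℝ) (hg : Differentiable ℝ g) (hg' : Differentiable ℝ (deriv g))
    (hAiry : ∀ x : ℝ, deriv (deriv g) x = x * g x) (t : ℝ) :
    ∀ z : ℝ, g (z ^ 2 / 4 - t) ≠ 0 →
      DifferentiableAt ℝ
        (fun w => -deriv g (w ^ 2 / 4 - t) / g (w ^ 2 / 4 - t) + w / 2) z ∧
      2 * deriv (fun w => -deriv g (w ^ 2 / 4 - t) / g (w ^ 2 / 4 - t) + w / 2) z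
        = z * (-deriv g (z ^ 2 / 4 - t) / g (z ^ 2 / 4 - t) + z / 2) ^ 2
          - z ^ 2 * (-deriv g (z ^ 2 / 4 - t) / g (z ^ 2 / 4 - t) + z / 2)
          + t * z + 1 := by
  intro z hz
  set ζ : ℝ := z ^ 2 / 4 - t with hζ
  have hφ : HasDerivAt (fun w : ℝ => w ^ 2 / 4 - t) (z / 2) z := by
    have h1 := ((hasDerivAt_pow 2 z).div_const 4).sub_const t
    refine h1.congr_deriv ?_
    simp; ring
  have hgc : HasDerivAt (fun w : ℝ => g (w ^ 2 / 4 - t))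
      (deriv g ζ * (z / 2)) z :=
    ((hg ζ).hasDerivAt).comp z hφ
  have hgc' : HasDerivAt (fun w : ℝ => deriv g (w ^ 2 / 4 - t))
      (ζ * g ζ * (z / 2)) z := by
    have := ((hg' ζ).hasDerivAt).comp z hφ
    rwa [hAiry] at this
  have hnum : HasDerivAt (fun w : ℝ => -deriv g (w ^ 2 / 4 - t))
      (-(ζ * g ζ * (z / 2))) z := hgc'.neg
  have hdiv : HasDerivAt (fun w : ℝ => -deriv g (w ^ 2 / 4 - t) / g (w ^ 2 / 4 - t))
      ((-(ζ * g ζ * (z / 2)) * g ζ - (-deriv g ζ) * (deriv g ζ * (z / 2))) / (g ζ) ^ 2)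
      z := hnum.div hgc hz
  have hF : HasDerivAt (fun w : ℝ => -deriv g (w ^ 2 / 4 - t) / g (w ^ 2 / 4 - t) + w / 2)
      ((-(ζ * g ζ * (z / 2)) * g ζ - (-deriv g ζ) * (deriv g ζ * (z / 2))) / (g ζ) ^ 2
        + 1 / 2) z := by
    exact (hdiv.add ((hasDerivAt_id z).div_const 2)).congr_deriv (by simp)
  refine ⟨hF.differentiableAt, ?_⟩
  rw [hF.deriv]
  set a := g ζ with ha
  set b := deriv g ζ with hb
  rw [hζ]
  field_simp
  ring
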